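/- Let f be continuous on [0,∞) and define [f]_m recursively by [f]_0 = f, [f]_m(x) = x^2 [f]_{m−1}(x) + x ∫_0^x [f]_{m−1}(s) ds. Then for every m ≥ 1 and x > 0, ℱ[f](x) = x^(−2m) ℱ[[f]_m](x), where ℱ[f](x) = ∫_0^{π/2} f(x sin θ) dθ. -/

import Mathlib

open MeasureTheory

/-- The iterated functions `[f]_m`. -/
noncomputable def iterF (f : ℝ → ℝ) : ℕ → ℝ → ℝ
  | 0 => f
  | m + 1 => fun x => x ^ 2 * iterF f m x + x * ∫ s in (0:ℝ)..x, iterF f m s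

lemma iterF_continuous {g : ℝ → ℝ} (hg : Continuous g) (m : ℕ) :
    Continuous (iterF g m) := by
  induction m with
  | zero => exact hg
  | succ m ih =>
    show Continuous fun x => x ^ 2 * iterF g m x + x * ∫ s in (0:ℝ)..x, iterF g m s
    exact ((continuous_pow 2).mul ih).add (continuous_id.mul
      (intervalIntegral.continuous_primitive (fun a b => ih.intervalIntegrable a b) 0))

lemma iterF_congr {g h : ℝ → ℝ} (hgh : ∀ y, 0 ≤ y → g y = h y) (m : ℕ) :
    ∀ y, 0 ≤ y → iterF g m y = iterF h m y := by
  induction m with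
  | zero => exact hgh
  | succ m ih =>
    intro y hy
    show y ^ 2 * iterF g m y + y * ∫ s in (0:ℝ)..y, iterF g m s
      = y ^ 2 * iterF h m y + y * ∫ s in (0:ℝ)..y, iterF h m s
    rw [ih y hy, intervalIntegral.integral_congr (g := iterF h m)]
    intro s hs
    rw [Set.uIcc_of_le hy] at hs
    exact ih s hs.1

/-- The key integration-by-parts step. -/
lemma step {g : ℝ → ℝ} (hg : Continuous g) (x : ℝ) :
    ∫ θ in (0:ℝ)..(Real.pi/2), iterF g 1 (x * Real.sin θ)
      = x ^ 2 * ∫ θ in (0:ℝ)..(Real.pi/2), g (x * Real.sin θ) := by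
  have hF : ∀ y : ℝ, HasDerivAt (fun t => ∫ s in (0:ℝ)..t, g s) (g y) y := fun y =>
    intervalIntegral.integral_hasDerivAt_right (hg.intervalIntegrable _ _)
      (hg.stronglyMeasurableAtFilter _ _) hg.continuousAt
  have hu : ∀ θ ∈ Set.uIcc (0:ℝ) (Real.pi/2),
      HasDerivAt (fun θ => ∫ s in (0:ℝ)..(x * Real.sin θ), g s)
        (g (x * Real.sin θ) * (x * Real.cos θ)) θ := by
    intro θ _
    exact (hF (x * Real.sin θ)).comp θ ((Real.hasDerivAt_sin θ).const_mul x)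
  have hv : ∀ θ ∈ Set.uIcc (0:ℝ) (Real.pi/2),
      HasDerivAt (fun θ => -Real.cos θ) (Real.sin θ) θ := by
    intro θ _
    simpa using (Real.hasDerivAt_cos θ).fun_neg
  have hu' : IntervalIntegrable (fun θ => g (x * Real.sin θ) * (x * Real.cos θ))
      MeasureTheory.volume 0 (Real.pi/2) :=
    ((hg.comp (continuous_const.mul Real.continuous_sin)).mul
      (continuous_const.mul Real.continuous_cos)).intervalIntegrable _ _
  have hv' : IntervalIntegrable Real.sin MeasureTheory.volume 0 (Real.pi/2) :=
    Real.continuous_sin.intervalIntegrable _ _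
  have hparts := intervalIntegral.integral_mul_deriv_eq_deriv_mul hu hv hu' hv'
  simp only [Real.cos_pi_div_two, Real.sin_zero, mul_zero, intervalIntegral.integral_same,
    neg_zero, Real.cos_zero, zero_mul, mul_neg, mul_one, sub_zero, zero_sub, neg_neg,
    intervalIntegral.integral_neg] at hparts
  -- hparts : ∫ θ, (∫ s in 0..x sinθ, g) * sinθ = ∫ θ, g(x sinθ) * (x cosθ) * cosθ
  have hcont1 : Continuous fun θ => (x * Real.sin θ) ^ 2 * g (x * Real.sin θ) :=
    ((continuous_const.mul Real.continuous_sin).pow 2).mul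
      (hg.comp (continuous_const.mul Real.continuous_sin))
  have hcont2 : Continuous fun θ => (x * Real.sin θ) *
      ∫ s in (0:ℝ)..(x * Real.sin θ), g s :=
    (continuous_const.mul Real.continuous_sin).mul
      ((intervalIntegral.continuous_primitive (fun a b => hg.intervalIntegrable a b) 0).comp
        (continuous_const.mul Real.continuous_sin))
  show (∫ θ in (0:ℝ)..(Real.pi/2), ((x * Real.sin θ) ^ 2 * g (x * Real.sin θ)
      + (x * Real.sin θ) * ∫ s in (0:ℝ)..(x * Real.sin θ), iterF g 0 s)) = _
  show (∫ θ in (0:ℝ)..(Real.pi/2), ((x * Real.sin θ) ^ 2 * g (x * Real.sin θ)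
      + (x * Real.sin θ) * ∫ s in (0:ℝ)..(x * Real.sin θ), g s)) = _
  rw [intervalIntegral.integral_add (hcont1.intervalIntegrable _ _)
    (hcont2.intervalIntegrable _ _)]
  have h2 : (∫ θ in (0:ℝ)..(Real.pi/2), (x * Real.sin θ) *
      ∫ s in (0:ℝ)..(x * Real.sin θ), g s)
      = x * ∫ θ in (0:ℝ)..(Real.pi/2), g (x * Real.sin θ) * (x * Real.cos θ) * Real.cos θ := by
    rw [← hparts, ← intervalIntegral.integral_const_mul]
    congr 1
    ext θ
    ring
  rw [h2, ← intervalIntegral.integral_const_mul, ← intervalIntegral.integral_const_mul,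
    ← intervalIntegral.integral_add]
  · congr 1
    ext θ
    have h := Real.sin_sq_add_cos_sq θ
    linear_combination (x ^ 2 * g (x * Real.sin θ)) * h
  · exact hcont1.intervalIntegrable _ _
  · exact (continuous_const.mul (((hg.comp (continuous_const.mul Real.continuous_sin)).mul
      (continuous_const.mul Real.continuous_cos)).mul Real.continuous_cos)).intervalIntegrable _ _

lemma iterF_one {g : ℝ → ℝ} (hg : Continuous g) (m : ℕ) :
    ∀ x : ℝ, iterF g (m + 1) x = iterF (iterF g 1) m x := by
  induction m with
  | zero => intro x; rfl
  | succ m ih =>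
    intro x
    show x ^ 2 * iterF g (m + 1) x + x * ∫ s in (0:ℝ)..x, iterF g (m + 1) s
      = x ^ 2 * iterF (iterF g 1) m x + x * ∫ s in (0:ℝ)..x, iterF (iterF g 1) m s
    rw [ih x]
    congr 1
    congr 1
    exact intervalIntegral.integral_congr fun s _ => ih s

lemma main_step {g : ℝ → ℝ} (hg : Continuous g) (m : ℕ) (x : ℝ) :
    ∫ θ in (0:ℝ)..(Real.pi/2), iterF g m (x * Real.sin θ)
      = x ^ (2 * m) * ∫ θ in (0:ℝ)..(Real.pi/2), g (x * Real.sin θ) := by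
  induction m generalizing g with
  | zero => simp [iterF]
  | succ m ih =>
    have h1 : ∀ θ : ℝ, iterF g (m + 1) (x * Real.sin θ)
        = iterF (iterF g 1) m (x * Real.sin θ) := fun θ => iterF_one hg m _
    simp only [h1]
    rw [ih (iterF_continuous hg 1), step hg x]
    ring

/-- `ℱ[f](x) = x^{-2m} ℱ[[f]_m](x)` for all `m ≥ 1` and `x > 0`. -/
theorem stmt_7 (f : ℝ → ℝ) (hf : ContinuousOn f (Set.Ici 0))
    (m : ℕ) (hm : 1 ≤ m) (x : ℝ) (hx : 0 < x) :
    ∫ θ in (0:ℝ)..(Real.pi/2), f (x * Real.sin θ)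
      = x ^ (-(2 * m : ℝ)) *
        ∫ θ in (0:ℝ)..(Real.pi/2), iterF f m (x * Real.sin θ) := by
  set g : ℝ → ℝ := fun y => f (max y 0) with hg_def
  have hg : Continuous g :=
    hf.comp_continuous (continuous_id.max continuous_const) (fun y => le_max_right y 0)
  have hgf : ∀ y, 0 ≤ y → g y = f y := fun y hy => by
    simp [hg_def, max_eq_left hy]
  have hsin : ∀ θ ∈ Set.uIcc (0:ℝ) (Real.pi/2), 0 ≤ x * Real.sin θ := by
    intro θ hθ
    rw [Set.uIcc_of_le (by positivity)] at hθ
    exact mul_nonneg hx.le (Real.sin_nonneg_of_nonneg_of_le_pi hθ.1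
      (hθ.2.trans (by linarith [Real.pi_pos])))
  have e1 : (∫ θ in (0:ℝ)..(Real.pi/2), f (x * Real.sin θ))
      = ∫ θ in (0:ℝ)..(Real.pi/2), g (x * Real.sin θ) :=
    intervalIntegral.integral_congr fun θ hθ => (hgf _ (hsin θ hθ)).symm
  have e2 : (∫ θ in (0:ℝ)..(Real.pi/2), iterF f m (x * Real.sin θ))
      = ∫ θ in (0:ℝ)..(Real.pi/2), iterF g m (x * Real.sin θ) :=
    intervalIntegral.integral_congr fun θ hθ =>
      (iterF_congr (fun y hy => (hgf y hy).symm) m _ (hsin θ hθ))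
  rw [e1, e2, main_step hg m x]
  have hxp : x ^ (-(2 * m : ℝ)) = (x ^ (2 * m) : ℝ)⁻¹ := by
    rw [← Real.rpow_natCast x (2 * m), ← Real.rpow_neg hx.le]
    norm_num
  rw [hxp]
  field_simp
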